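/- Let X ⊆ [0,1)^d be a finite set with N points and let w : X → ℝ be weights. Then the weighted periodic L₂-discrepancy satisfies ∫_{[0,1)^d} ∫_{[0,1)^d} D_{(X,w)}(x,y)² dy dx = −(∑_{x∈X} w(x))²/3^d + ∑_{x,y∈X} w(x)w(y)·∏_{k=1}^d (1/2 − |x_k−y_k| + |x_k−y_k|²), where D_{(X,w)}(x,y) = ∑_{z∈X, z∈[x,y)} w(z) − (∑_{z∈X} w(z))·|[x,y)|, with [x,y) the (possibly wrap-around) periodic box and |[x,y)| its Lebesgue measure. -/

import Mathlib

open MeasureTheory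

/-- Length of the (possibly wrap-around) periodic interval `[a,b)` in `[0,1)`. -/
noncomputable def perLen (a b : ℝ) : ℝ := if a < b then b - a else 1 - a + b

/-- Indicator of membership `z ∈ [a,b)` for the periodic interval. -/
noncomputable def perInd (a b z : ℝ) : ℝ :=
  if a < b then (if a ≤ z ∧ z < b then 1 else 0) else (if a ≤ z ∨ z < b then 1 else 0)

/-- Discrepancy function of the weighted point set `(X, w)`. -/
noncomputable def perDisc {d : ℕ} (X : Finset (Fin d → ℝ)) (w : (Fin d → ℝ) → ℝ)
    (x y : Fin d → ℝ) : ℝ :=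
  (∑ z ∈ X, w z * ∏ k : Fin d, perInd (x k) (y k) (z k)) -
    (∑ z ∈ X, w z) * ∏ k : Fin d, perLen (x k) (y k)

noncomputable def ico (t : ℝ) : ℝ := if t ∈ Set.Ico (0:ℝ) 1 then 1 else 0

noncomputable def phi (z a : ℝ) : ℝ :=
  if a ≤ z then 1/2 - (z-a)^2/2 else (a-z) - (a-z)^2/2

noncomputable def psi (z z' a : ℝ) : ℝ :=
  if a ≤ min z z' then a + 1 - max z z'
  else if a ≤ max z z' then a - min z z' else a - max z z'

section helpers
lemma piece_integrable {f g : ℝ → ℝ} {u v : ℝ} (hg : IntervalIntegrable g volume u v)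
    (h : ∀ b ∈ Set.uIoc u v, f b = g b) : IntervalIntegrable f volume u v := by
  rw [intervalIntegrable_iff] at hg ⊢
  exact hg.congr_fun (fun b hb => (h b hb).symm) measurableSet_uIoc

lemma piece_eq {f g : ℝ → ℝ} {u v : ℝ} (h : ∀ b ∈ Set.uIoc u v, f b = g b) :
    ∫ b in u..v, f b = ∫ b in u..v, g b :=
  intervalIntegral.integral_congr_ae (Filter.Eventually.of_forall h)

lemma intQuad (p q r u v : ℝ) :
    ∫ b in u..v, (p + q * b + r * b ^ 2) =
      p * (v - u) + q * (v ^ 2 - u ^ 2) / 2 + r * (v ^ 3 - u ^ 3) / 3 := by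
  have h : ∀ b : ℝ, HasDerivAt (fun t : ℝ => p * t + q * t ^ 2 / 2 + r * t ^ 3 / 3)
      (p + q * b + r * b ^ 2) b := by
    intro b
    have h1 : HasDerivAt (fun t : ℝ => t) 1 b := hasDerivAt_id b
    have h2 := hasDerivAt_pow 2 b
    have h3 := hasDerivAt_pow 3 b
    have := ((h1.const_mul p).add ((h2.const_mul q).div_const 2)).add
      ((h3.const_mul r).div_const 3)
    exact this.congr_deriv (by
      simp only [Nat.cast_ofNat, show (2:ℕ)-1 = 1 from rfl, show (3:ℕ)-1 = 2 from rfl, pow_one]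
      ring)
  rw [intervalIntegral.integral_eq_sub_of_hasDerivAt (fun b _ => h b)
    (by apply Continuous.intervalIntegrable; continuity)]
  ring

lemma eval_piece {f : ℝ → ℝ} (p q r : ℝ) {u v : ℝ}
    (h : ∀ b ∈ Set.uIoc u v, f b = p + q * b + r * b ^ 2) :
    (∫ b in u..v, f b) = p * (v - u) + q * (v ^ 2 - u ^ 2) / 2 + r * (v ^ 3 - u ^ 3) / 3
      ∧ IntervalIntegrable f volume u v :=
  ⟨by rw [piece_eq h, intQuad],
   piece_integrable (by apply Continuous.intervalIntegrable; continuity) h⟩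
end helpers

lemma L1 {a : ℝ} (ha : a ∈ Set.Ico (0:ℝ) 1) :
    ∫ b in (0:ℝ)..1, (perLen a b) ^ 2 = 1/3 := by
  obtain ⟨ha0, ha1⟩ := ha
  obtain ⟨e1, i1⟩ := eval_piece (f := fun b => (perLen a b)^2)
      ((1-a)^2) (2*(1-a)) 1 (u := 0) (v := a) (by
    intro b hb
    rw [Set.uIoc_of_le ha0] at hb
    simp only [perLen]; rw [if_neg (not_lt.2 hb.2)]
    ring)
  obtain ⟨e2, i2⟩ := eval_piece (f := fun b => (perLen a b)^2)
      (a^2) (-2*a) 1 (u := a) (v := 1) (by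
    intro b hb
    rw [Set.uIoc_of_le ha1.le] at hb
    simp only [perLen]; rw [if_pos hb.1]
    ring)
  rw [← intervalIntegral.integral_add_adjacent_intervals i1 i2, e1, e2]
  ring

lemma L2 {a z : ℝ} (ha : a ∈ Set.Ico (0:ℝ) 1) (hz : z ∈ Set.Ico (0:ℝ) 1) :
    ∫ b in (0:ℝ)..1, perInd a b z * perLen a b = phi z a := by
  obtain ⟨ha0, ha1⟩ := ha
  obtain ⟨hz0, hz1⟩ := hz
  rcases le_or_gt a z with haz | haz
  · -- pieces 0..a, a..z, z..1
    obtain ⟨e1, i1⟩ := eval_piece (f := fun b => perInd a b z * perLen a b)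
        (1-a) 1 0 (u := 0) (v := a) (by
      intro b hb
      rw [Set.uIoc_of_le ha0] at hb
      simp only [perInd, perLen]; rw [if_neg (not_lt.2 hb.2), if_neg (not_lt.2 hb.2),
        if_pos (Or.inl haz)]
      ring)
    obtain ⟨e2, i2⟩ := eval_piece (f := fun b => perInd a b z * perLen a b)
        0 0 0 (u := a) (v := z) (by
      intro b hb
      rw [Set.uIoc_of_le haz] at hb
      simp only [perInd]; rw [if_pos hb.1, if_neg (by rintro ⟨-, h⟩; exact absurd hb.2 (not_le.2 h))]
      ring)
    obtain ⟨e3, i3⟩ := eval_piece (f := fun b => perInd a b z * perLen a b)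
        (-a) 1 0 (u := z) (v := 1) (by
      intro b hb
      rw [Set.uIoc_of_le hz1.le] at hb
      have hab : a < b := lt_of_le_of_lt haz hb.1
      simp only [perInd, perLen]; rw [if_pos hab, if_pos hab, if_pos ⟨haz, hb.1⟩]
      ring)
    rw [← intervalIntegral.integral_add_adjacent_intervals (i1.trans i2) i3,
      ← intervalIntegral.integral_add_adjacent_intervals i1 i2, e1, e2, e3,
      ]
    simp only [phi]; rw [if_pos haz]
    ring
  · -- pieces 0..z, z..a, a..1
    obtain ⟨e1, i1⟩ := eval_piece (f := fun b => perInd a b z * perLen a b)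
        0 0 0 (u := 0) (v := z) (by
      intro b hb
      rw [Set.uIoc_of_le hz0] at hb
      have hba : ¬ a < b := not_lt.2 (hb.2.trans haz.le)
      simp only [perInd]; rw [if_neg hba, if_neg (by
        rintro (h | h)
        · exact absurd haz (not_lt.2 h)
        · exact absurd hb.2 (not_le.2 h))]
      ring)
    obtain ⟨e2, i2⟩ := eval_piece (f := fun b => perInd a b z * perLen a b)
        (1-a) 1 0 (u := z) (v := a) (by
      intro b hb
      rw [Set.uIoc_of_le haz.le] at hb
      have hba : ¬ a < b := not_lt.2 hb.2
      simp only [perInd, perLen]; rw [if_neg hba, if_neg hba, if_pos (Or.inr hb.1)]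
      ring)
    obtain ⟨e3, i3⟩ := eval_piece (f := fun b => perInd a b z * perLen a b)
        0 0 0 (u := a) (v := 1) (by
      intro b hb
      rw [Set.uIoc_of_le ha1.le] at hb
      simp only [perInd]; rw [if_pos hb.1, if_neg (by rintro ⟨h, -⟩; exact absurd haz (not_lt.2 h))]
      ring)
    rw [← intervalIntegral.integral_add_adjacent_intervals (i1.trans i2) i3,
      ← intervalIntegral.integral_add_adjacent_intervals i1 i2, e1, e2, e3,
      ]
    simp only [phi]; rw [if_neg (not_le.2 haz)]
    ring

lemma L3aux {a m M : ℝ} (ha : a ∈ Set.Ico (0:ℝ) 1) (hm : m ∈ Set.Ico (0:ℝ) 1)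
    (hM : M ∈ Set.Ico (0:ℝ) 1) (hmM : m ≤ M) :
    ∫ b in (0:ℝ)..1, perInd a b m * perInd a b M =
      if a ≤ m then a + 1 - M else if a ≤ M then a - m else a - M := by
  obtain ⟨ha0, ha1⟩ := ha
  obtain ⟨hm0, hm1⟩ := hm
  obtain ⟨hM0, hM1⟩ := hM
  rcases le_or_gt a m with ham | ham
  · -- pieces 0..a, a..M, M..1
    have haM : a ≤ M := ham.trans hmM
    obtain ⟨e1, i1⟩ := eval_piece (f := fun b => perInd a b m * perInd a b M)
        1 0 0 (u := 0) (v := a) (by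
      intro b hb
      rw [Set.uIoc_of_le ha0] at hb
      have hba : ¬ a < b := not_lt.2 hb.2
      simp only [perInd]; rw [if_neg hba, if_neg hba, if_pos (Or.inl ham), if_pos (Or.inl haM)]
      ring)
    obtain ⟨e2, i2⟩ := eval_piece (f := fun b => perInd a b m * perInd a b M)
        0 0 0 (u := a) (v := M) (by
      intro b hb
      rw [Set.uIoc_of_le haM] at hb
      simp only [perInd]; rw [if_pos hb.1, if_pos hb.1,
        if_neg (show ¬(a ≤ M ∧ M < b) by rintro ⟨-, h⟩; exact absurd hb.2 (not_le.2 h))]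
      ring)
    obtain ⟨e3, i3⟩ := eval_piece (f := fun b => perInd a b m * perInd a b M)
        1 0 0 (u := M) (v := 1) (by
      intro b hb
      rw [Set.uIoc_of_le hM1.le] at hb
      have hab : a < b := lt_of_le_of_lt haM hb.1
      simp only [perInd]; rw [if_pos hab, if_pos hab, if_pos ⟨ham, lt_of_le_of_lt hmM hb.1⟩,
        if_pos ⟨haM, hb.1⟩]
      ring)
    rw [← intervalIntegral.integral_add_adjacent_intervals (i1.trans i2) i3,
      ← intervalIntegral.integral_add_adjacent_intervals i1 i2, e1, e2, e3, if_pos ham]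
    ring
  · rcases le_or_gt a M with haM | haM
    · -- pieces 0..m, m..a, a..1
      obtain ⟨e1, i1⟩ := eval_piece (f := fun b => perInd a b m * perInd a b M)
          0 0 0 (u := 0) (v := m) (by
        intro b hb
        rw [Set.uIoc_of_le hm0] at hb
        have hba : ¬ a < b := not_lt.2 (hb.2.trans ham.le)
        simp only [perInd]; rw [if_neg hba, if_neg (show ¬(a ≤ m ∨ m < b) by
          rintro (h | h)
          · exact absurd ham (not_lt.2 h)
          · exact absurd hb.2 (not_le.2 h))]
        ring)
      obtain ⟨e2, i2⟩ := eval_piece (f := fun b => perInd a b m * perInd a b M)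
          1 0 0 (u := m) (v := a) (by
        intro b hb
        rw [Set.uIoc_of_le ham.le] at hb
        have hba : ¬ a < b := not_lt.2 hb.2
        simp only [perInd]; rw [if_neg hba, if_neg hba, if_pos (Or.inr hb.1),
          if_pos (Or.inl haM)]
        ring)
      obtain ⟨e3, i3⟩ := eval_piece (f := fun b => perInd a b m * perInd a b M)
          0 0 0 (u := a) (v := 1) (by
        intro b hb
        rw [Set.uIoc_of_le ha1.le] at hb
        simp only [perInd]; rw [if_pos hb.1,
          if_neg (show ¬(a ≤ m ∧ m < b) by rintro ⟨h, -⟩; exact absurd ham (not_lt.2 h))]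
        ring)
      rw [← intervalIntegral.integral_add_adjacent_intervals (i1.trans i2) i3,
        ← intervalIntegral.integral_add_adjacent_intervals i1 i2, e1, e2, e3,
        if_neg (not_le.2 ham), if_pos haM]
      ring
    · -- pieces 0..M, M..a, a..1
      obtain ⟨e1, i1⟩ := eval_piece (f := fun b => perInd a b m * perInd a b M)
          0 0 0 (u := 0) (v := M) (by
        intro b hb
        rw [Set.uIoc_of_le hM0] at hb
        have hba : ¬ a < b := not_lt.2 (hb.2.trans haM.le)
        simp only [perInd]; rw [if_neg hba, if_neg hba, if_neg (show ¬(a ≤ M ∨ M < b) by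
          rintro (h | h)
          · exact absurd haM (not_lt.2 h)
          · exact absurd hb.2 (not_le.2 h))]
        ring)
      obtain ⟨e2, i2⟩ := eval_piece (f := fun b => perInd a b m * perInd a b M)
          1 0 0 (u := M) (v := a) (by
        intro b hb
        rw [Set.uIoc_of_le haM.le] at hb
        have hba : ¬ a < b := not_lt.2 hb.2
        simp only [perInd]; rw [if_neg hba, if_neg hba,
          if_pos (Or.inr (lt_of_le_of_lt hmM hb.1)), if_pos (Or.inr hb.1)]
        ring)
      obtain ⟨e3, i3⟩ := eval_piece (f := fun b => perInd a b m * perInd a b M)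
          0 0 0 (u := a) (v := 1) (by
        intro b hb
        rw [Set.uIoc_of_le ha1.le] at hb
        simp only [perInd]; rw [if_pos hb.1,
          if_neg (show ¬(a ≤ m ∧ m < b) by rintro ⟨h, -⟩; exact absurd ham (not_lt.2 h))]
        ring)
      rw [← intervalIntegral.integral_add_adjacent_intervals (i1.trans i2) i3,
        ← intervalIntegral.integral_add_adjacent_intervals i1 i2, e1, e2, e3,
        if_neg (not_le.2 ham), if_neg (not_le.2 haM)]
      ring

lemma L3 {a z z' : ℝ} (ha : a ∈ Set.Ico (0:ℝ) 1) (hz : z ∈ Set.Ico (0:ℝ) 1)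
    (hz' : z' ∈ Set.Ico (0:ℝ) 1) :
    ∫ b in (0:ℝ)..1, perInd a b z * perInd a b z' = psi z z' a := by
  have hmin : min z z' ∈ Set.Ico (0:ℝ) 1 := by
    rcases le_total z z' with h | h <;> simp [min_eq_left, min_eq_right, h, hz, hz']
  have hmax : max z z' ∈ Set.Ico (0:ℝ) 1 := by
    rcases le_total z z' with h | h <;> simp [max_eq_left, max_eq_right, h, hz, hz']
  have key := L3aux ha hmin hmax (min_le_max)
  rw [psi, ← key]
  rcases le_total z z' with h | h
  · rw [min_eq_left h, max_eq_right h]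
  · rw [min_eq_right h, max_eq_left h]
    simp [mul_comm]

lemma O2 {z : ℝ} (hz : z ∈ Set.Ico (0:ℝ) 1) :
    ∫ a in (0:ℝ)..1, phi z a = 1/3 := by
  obtain ⟨hz0, hz1⟩ := hz
  obtain ⟨e1, i1⟩ := eval_piece (f := fun a => phi z a)
      (1/2 - z^2/2) z (-(1/2)) (u := 0) (v := z) (by
    intro a ha
    rw [Set.uIoc_of_le hz0] at ha
    simp only [phi]; rw [if_pos ha.2]
    ring)
  obtain ⟨e2, i2⟩ := eval_piece (f := fun a => phi z a)
      (-z - z^2/2) (1+z) (-(1/2)) (u := z) (v := 1) (by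
    intro a ha
    rw [Set.uIoc_of_le hz1.le] at ha
    simp only [phi]; rw [if_neg (not_le.2 ha.1)]
    ring)
  rw [← intervalIntegral.integral_add_adjacent_intervals i1 i2, e1, e2]
  ring

lemma O3 {z z' : ℝ} (hz : z ∈ Set.Ico (0:ℝ) 1) (hz' : z' ∈ Set.Ico (0:ℝ) 1) :
    ∫ a in (0:ℝ)..1, psi z z' a = 1/2 - |z - z'| + |z - z'| ^ 2 := by
  have habs : |z - z'| = max z z' - min z z' := by
    rcases le_total z z' with h | h
    · rw [max_eq_right h, min_eq_left h, abs_of_nonpos (by linarith)]; ring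
    · rw [max_eq_left h, min_eq_right h, abs_of_nonneg (by linarith)]
  set m := min z z' with hm
  set M := max z z' with hM
  have hm0 : (0:ℝ) ≤ m := le_min hz.1 hz'.1
  have hM1 : M < 1 := max_lt hz.2 hz'.2
  have hmM : m ≤ M := min_le_max
  obtain ⟨e1, i1⟩ := eval_piece (f := fun a => psi z z' a)
      (1 - M) 1 0 (u := 0) (v := m) (by
    intro a ha
    rw [Set.uIoc_of_le hm0] at ha
    simp only [psi]; rw [if_pos ha.2]
    ring)
  obtain ⟨e2, i2⟩ := eval_piece (f := fun a => psi z z' a)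
      (-m) 1 0 (u := m) (v := M) (by
    intro a ha
    rw [Set.uIoc_of_le hmM] at ha
    simp only [psi]; rw [if_neg (not_le.2 ha.1), if_pos ha.2]
    ring)
  obtain ⟨e3, i3⟩ := eval_piece (f := fun a => psi z z' a)
      (-M) 1 0 (u := M) (v := 1) (by
    intro a ha
    rw [Set.uIoc_of_le hM1.le] at ha
    simp only [psi]; rw [if_neg (not_le.2 (lt_of_le_of_lt hmM ha.1)),
      if_neg (not_le.2 ha.1)]
    ring)
  rw [← intervalIntegral.integral_add_adjacent_intervals (i1.trans i2) i3,
    ← intervalIntegral.integral_add_adjacent_intervals i1 i2, e1, e2, e3, habs]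
  ring

lemma ico_mul_eq_indicator (f : ℝ → ℝ) :
    (fun b => ico b * f b) = Set.indicator (Set.Ico (0:ℝ) 1) f := by
  funext b
  simp only [ico, Set.indicator_apply]
  split <;> simp

lemma integral_ico_mul (f : ℝ → ℝ) :
    ∫ b, ico b * f b = ∫ b in (0:ℝ)..1, f b := by
  rw [ico_mul_eq_indicator, MeasureTheory.integral_indicator measurableSet_Ico,
    MeasureTheory.setIntegral_congr_set MeasureTheory.Ico_ae_eq_Ioc,
    ← intervalIntegral.integral_of_le zero_le_one]

lemma measurable_perLen (a : ℝ) : Measurable fun b => perLen a b := by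
  unfold perLen
  exact Measurable.ite measurableSet_Ioi (by fun_prop) (by fun_prop)

lemma measurable_perInd (a z : ℝ) : Measurable fun b => perInd a b z := by
  unfold perInd
  refine Measurable.ite measurableSet_Ioi
    (Measurable.ite ?_ measurable_const measurable_const)
    (Measurable.ite ?_ measurable_const measurable_const)
  · show MeasurableSet {b : ℝ | a ≤ z ∧ z < b}
    have : {b : ℝ | a ≤ z ∧ z < b} = {b : ℝ | a ≤ z} ∩ Set.Ioi z := rfl
    rw [this]
    exact (MeasurableSet.const _).inter measurableSet_Ioi
  · show MeasurableSet {b : ℝ | a ≤ z ∨ z < b}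
    have : {b : ℝ | a ≤ z ∨ z < b} = {b : ℝ | a ≤ z} ∪ Set.Ioi z := rfl
    rw [this]
    exact (MeasurableSet.const _).union measurableSet_Ioi

lemma measurable_phi (z : ℝ) : Measurable fun a => phi z a := by
  unfold phi
  exact Measurable.ite measurableSet_Iic (by fun_prop) (by fun_prop)

lemma measurable_psi (z z' : ℝ) : Measurable fun a => psi z z' a := by
  unfold psi
  exact Measurable.ite measurableSet_Iic (by fun_prop)
    (Measurable.ite measurableSet_Iic (by fun_prop) (by fun_prop))

lemma abs_perInd_le (a b z : ℝ) : |perInd a b z| ≤ 1 := by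
  unfold perInd
  split_ifs <;> simp

lemma abs_perLen_le (a : ℝ) {b : ℝ} (hb : b ∈ Set.Ico (0:ℝ) 1) :
    |perLen a b| ≤ |a| + 2 := by
  obtain ⟨hb0, hb1⟩ := hb
  have h1 := neg_abs_le a
  have h2 := le_abs_self a
  unfold perLen
  split_ifs <;> (rw [abs_le]; constructor <;> nlinarith)

lemma abs_phi_le {z : ℝ} (hz : z ∈ Set.Ico (0:ℝ) 1) {a : ℝ} (ha : a ∈ Set.Ico (0:ℝ) 1) :
    |phi z a| ≤ 2 := by
  obtain ⟨hz0, hz1⟩ := hz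
  obtain ⟨ha0, ha1⟩ := ha
  unfold phi
  split_ifs <;> (rw [abs_le]; constructor <;> nlinarith)

lemma abs_psi_le {z z' : ℝ} (hz : z ∈ Set.Ico (0:ℝ) 1) (hz' : z' ∈ Set.Ico (0:ℝ) 1)
    {a : ℝ} (ha : a ∈ Set.Ico (0:ℝ) 1) : |psi z z' a| ≤ 3 := by
  have hm0 : (0:ℝ) ≤ min z z' := le_min hz.1 hz'.1
  have hM1 : max z z' < 1 := max_lt hz.2 hz'.2
  have hmM : min z z' ≤ max z z' := min_le_max
  obtain ⟨ha0, ha1⟩ := ha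
  unfold psi
  split_ifs <;> (rw [abs_le]; constructor <;> nlinarith)

lemma integrable_ico_mul {f : ℝ → ℝ} (hf : Measurable f) (C : ℝ)
    (hC : ∀ b ∈ Set.Ico (0:ℝ) 1, |f b| ≤ C) :
    Integrable (fun b => ico b * f b) := by
  rw [ico_mul_eq_indicator, integrable_indicator_iff measurableSet_Ico]
  apply Measure.integrableOn_of_bounded (M := C)
  · rw [Real.volume_Ico]
    exact ENNReal.ofReal_ne_top
  · exact hf.aestronglyMeasurable
  · exact (ae_restrict_iff' measurableSet_Ico).2 (ae_of_all _ fun b hb => by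
      rw [Real.norm_eq_abs]; exact hC b hb)

lemma int_y1 (a z z' : ℝ) :
    Integrable fun b => ico a * (ico b * (perInd a b z * perInd a b z')) := by
  refine (integrable_ico_mul ((measurable_perInd a z).mul (measurable_perInd a z')) 1
    (fun b _ => ?_)).const_mul _
  rw [Pi.mul_apply, abs_mul]
  have h1 := abs_perInd_le a b z
  have h2 := abs_perInd_le a b z'
  have h3 := abs_nonneg (perInd a b z)
  have h4 := abs_nonneg (perInd a b z')
  nlinarith

lemma int_y2 (a z : ℝ) :
    Integrable fun b => ico a * (ico b * (perInd a b z * perLen a b)) := by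
  refine (integrable_ico_mul ((measurable_perInd a z).mul (measurable_perLen a)) (|a| + 2)
    (fun b hb => ?_)).const_mul _
  rw [Pi.mul_apply, abs_mul]
  have h1 := abs_perInd_le a b z
  have h2 := abs_perLen_le a hb
  have h3 := abs_nonneg (perInd a b z)
  have h4 := abs_nonneg (perLen a b)
  have h5 := abs_nonneg a
  nlinarith

lemma int_y4 (a : ℝ) :
    Integrable fun b => ico a * (ico b * perLen a b ^ 2) := by
  refine (integrable_ico_mul ((measurable_perLen a).pow_const 2) ((|a| + 2) ^ 2)
    (fun b hb => ?_)).const_mul _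
  rw [abs_pow]
  have h2 := abs_perLen_le a hb
  have h4 := abs_nonneg (perLen a b)
  nlinarith

lemma B1 (a : ℝ) : ∫ b, ico a * (ico b * perLen a b ^ 2) = ico a * (1/3) := by
  rw [MeasureTheory.integral_const_mul]
  by_cases ha : a ∈ Set.Ico (0:ℝ) 1
  · rw [integral_ico_mul, L1 ha]
  · rw [show ico a = 0 from if_neg ha]
    simp

lemma B2 {z : ℝ} (hz : z ∈ Set.Ico (0:ℝ) 1) (a : ℝ) :
    ∫ b, ico a * (ico b * (perInd a b z * perLen a b)) = ico a * phi z a := by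
  rw [MeasureTheory.integral_const_mul]
  by_cases ha : a ∈ Set.Ico (0:ℝ) 1
  · rw [integral_ico_mul, L2 ha hz]
  · rw [show ico a = 0 from if_neg ha]
    simp

lemma B3 {z z' : ℝ} (hz : z ∈ Set.Ico (0:ℝ) 1) (hz' : z' ∈ Set.Ico (0:ℝ) 1) (a : ℝ) :
    ∫ b, ico a * (ico b * (perInd a b z * perInd a b z')) = ico a * psi z z' a := by
  rw [MeasureTheory.integral_const_mul]
  by_cases ha : a ∈ Set.Ico (0:ℝ) 1
  · rw [integral_ico_mul, L3 ha hz hz']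
  · rw [show ico a = 0 from if_neg ha]
    simp

lemma C1 : ∫ a, ico a * (1/3 : ℝ) = 1/3 := by
  rw [integral_ico_mul]
  simp

lemma C2 {z : ℝ} (hz : z ∈ Set.Ico (0:ℝ) 1) : ∫ a, ico a * phi z a = 1/3 := by
  rw [integral_ico_mul, O2 hz]

lemma C3 {z z' : ℝ} (hz : z ∈ Set.Ico (0:ℝ) 1) (hz' : z' ∈ Set.Ico (0:ℝ) 1) :
    ∫ a, ico a * psi z z' a = 1/2 - |z - z'| + |z - z'| ^ 2 := by
  rw [integral_ico_mul, O3 hz hz']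

lemma int_x1 {z z' : ℝ} (hz : z ∈ Set.Ico (0:ℝ) 1) (hz' : z' ∈ Set.Ico (0:ℝ) 1) :
    Integrable fun a => ico a * psi z z' a :=
  integrable_ico_mul (measurable_psi z z') 3 (fun a ha => abs_psi_le hz hz' ha)

lemma int_x2 {z : ℝ} (hz : z ∈ Set.Ico (0:ℝ) 1) :
    Integrable fun a => ico a * phi z a :=
  integrable_ico_mul (measurable_phi z) 2 (fun a ha => abs_phi_le hz ha)

lemma int_x4 : Integrable fun a => ico a * (1/3 : ℝ) :=
  integrable_ico_mul measurable_const (1/3) (fun a _ => by rw [abs_of_nonneg] <;> norm_num)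

lemma setJoint {d : ℕ} (f : (Fin d → ℝ) → ℝ) :
    ∫ x in Set.univ.pi (fun _ : Fin d => Set.Ico (0:ℝ) 1), f x
      = ∫ x, (∏ k, ico (x k)) * f x := by
  classical
  rw [← MeasureTheory.integral_indicator (MeasurableSet.univ_pi fun _ => measurableSet_Ico)]
  congr 1
  funext x
  rw [Set.indicator_apply]
  by_cases h : x ∈ Set.univ.pi (fun _ : Fin d => Set.Ico (0:ℝ) 1)
  · rw [if_pos h, Finset.prod_eq_one
      (fun k _ => show ico (x k) = 1 from if_pos (h k (Set.mem_univ k))), one_mul]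
  · rw [if_neg h]
    rw [Set.mem_univ_pi] at h
    push_neg at h
    obtain ⟨k, hk⟩ := h
    rw [Finset.prod_eq_zero (Finset.mem_univ k) (show ico (x k) = 0 from if_neg hk), zero_mul]

lemma intT1 {d : ℕ} (x z z' : Fin d → ℝ) :
    Integrable fun y : Fin d → ℝ =>
      ∏ k, ico (x k) * (ico (y k) * (perInd (x k) (y k) (z k) * perInd (x k) (y k) (z' k))) :=
  Integrable.fintype_prod
    (f := fun k b => ico (x k) * (ico b * (perInd (x k) b (z k) * perInd (x k) b (z' k))))
    fun k => int_y1 (x k) (z k) (z' k)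

lemma intT2 {d : ℕ} (x z : Fin d → ℝ) :
    Integrable fun y : Fin d → ℝ =>
      ∏ k, ico (x k) * (ico (y k) * (perInd (x k) (y k) (z k) * perLen (x k) (y k))) :=
  Integrable.fintype_prod
    (f := fun k b => ico (x k) * (ico b * (perInd (x k) b (z k) * perLen (x k) b)))
    fun k => int_y2 (x k) (z k)

lemma intT4 {d : ℕ} (x : Fin d → ℝ) :
    Integrable fun y : Fin d → ℝ =>
      ∏ k, ico (x k) * (ico (y k) * perLen (x k) (y k) ^ 2) :=
  Integrable.fintype_prod
    (f := fun k b => ico (x k) * (ico b * perLen (x k) b ^ 2))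
    fun k => int_y4 (x k)

lemma evT1 {d : ℕ} (x : Fin d → ℝ) {z z' : Fin d → ℝ}
    (hz : ∀ k, z k ∈ Set.Ico (0:ℝ) 1) (hz' : ∀ k, z' k ∈ Set.Ico (0:ℝ) 1) :
    (∫ y : Fin d → ℝ,
      ∏ k, ico (x k) * (ico (y k) * (perInd (x k) (y k) (z k) * perInd (x k) (y k) (z' k))))
      = ∏ k, ico (x k) * psi (z k) (z' k) (x k) :=
  (MeasureTheory.integral_fintype_prod_eq_prod (ι := Fin d)
    (fun k b => ico (x k) * (ico b * (perInd (x k) b (z k) * perInd (x k) b (z' k))))).trans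
    (Finset.prod_congr rfl fun k _ => B3 (hz k) (hz' k) (x k))

lemma evT2 {d : ℕ} (x : Fin d → ℝ) {z : Fin d → ℝ}
    (hz : ∀ k, z k ∈ Set.Ico (0:ℝ) 1) :
    (∫ y : Fin d → ℝ,
      ∏ k, ico (x k) * (ico (y k) * (perInd (x k) (y k) (z k) * perLen (x k) (y k))))
      = ∏ k, ico (x k) * phi (z k) (x k) :=
  (MeasureTheory.integral_fintype_prod_eq_prod (ι := Fin d)
    (fun k b => ico (x k) * (ico b * (perInd (x k) b (z k) * perLen (x k) b)))).trans
    (Finset.prod_congr rfl fun k _ => B2 (hz k) (x k))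

lemma evT4 {d : ℕ} (x : Fin d → ℝ) :
    (∫ y : Fin d → ℝ, ∏ k, ico (x k) * (ico (y k) * perLen (x k) (y k) ^ 2))
      = ∏ k, ico (x k) * (1/3 : ℝ) :=
  (MeasureTheory.integral_fintype_prod_eq_prod (ι := Fin d)
    (fun k b => ico (x k) * (ico b * perLen (x k) b ^ 2))).trans
    (Finset.prod_congr rfl fun k _ => B1 (x k))

lemma intP1 {d : ℕ} {z z' : Fin d → ℝ}
    (hz : ∀ k, z k ∈ Set.Ico (0:ℝ) 1) (hz' : ∀ k, z' k ∈ Set.Ico (0:ℝ) 1) :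
    Integrable fun x : Fin d → ℝ => ∏ k, ico (x k) * psi (z k) (z' k) (x k) :=
  Integrable.fintype_prod (f := fun k a => ico a * psi (z k) (z' k) a)
    fun k => int_x1 (hz k) (hz' k)

lemma intP2 {d : ℕ} {z : Fin d → ℝ} (hz : ∀ k, z k ∈ Set.Ico (0:ℝ) 1) :
    Integrable fun x : Fin d → ℝ => ∏ k, ico (x k) * phi (z k) (x k) :=
  Integrable.fintype_prod (f := fun k a => ico a * phi (z k) a) fun k => int_x2 (hz k)

lemma intP4 {d : ℕ} :
    Integrable fun x : Fin d → ℝ => ∏ k : Fin d, ico (x k) * (1/3 : ℝ) :=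
  Integrable.fintype_prod (f := fun _ a => ico a * (1/3 : ℝ)) fun _ => int_x4

lemma evP1 {d : ℕ} {z z' : Fin d → ℝ}
    (hz : ∀ k, z k ∈ Set.Ico (0:ℝ) 1) (hz' : ∀ k, z' k ∈ Set.Ico (0:ℝ) 1) :
    (∫ x : Fin d → ℝ, ∏ k, ico (x k) * psi (z k) (z' k) (x k))
      = ∏ k, (1/2 - |z k - z' k| + |z k - z' k| ^ 2) :=
  (MeasureTheory.integral_fintype_prod_eq_prod (ι := Fin d)
    (fun k a => ico a * psi (z k) (z' k) a)).trans
    (Finset.prod_congr rfl fun k _ => C3 (hz k) (hz' k))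

lemma evP2 {d : ℕ} {z : Fin d → ℝ} (hz : ∀ k, z k ∈ Set.Ico (0:ℝ) 1) :
    (∫ x : Fin d → ℝ, ∏ k, ico (x k) * phi (z k) (x k)) = (1/3 : ℝ) ^ d := by
  erw [(MeasureTheory.integral_fintype_prod_eq_prod (ι := Fin d)
    (fun k a => ico a * phi (z k) a)).trans
    (Finset.prod_congr rfl fun k _ => C2 (hz k)), Finset.prod_const, Finset.card_univ,
    Fintype.card_fin]

lemma evP4 {d : ℕ} :
    (∫ x : Fin d → ℝ, ∏ k : Fin d, ico (x k) * (1/3 : ℝ)) = (1/3 : ℝ) ^ d := by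
  erw [(MeasureTheory.integral_fintype_prod_eq_prod (ι := Fin d)
    (fun _ a => ico a * (1/3 : ℝ))).trans
    (Finset.prod_congr rfl fun k _ => C1), Finset.prod_const, Finset.card_univ,
    Fintype.card_fin]

lemma integrable_combo {α : Type*} [MeasurableSpace α] {μ : Measure α} {A B C D : α → ℝ}
    (hA : Integrable A μ) (hB : Integrable B μ) (hC : Integrable C μ) (hD : Integrable D μ) :
    Integrable (fun a => A a - B a - C a + D a) μ := ((hA.sub hB).sub hC).add hD

lemma integrable_combo_mul {α : Type*} [MeasurableSpace α] {μ : Measure α} {A B C D : α → ℝ}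
    (hA : Integrable A μ) (hB : Integrable B μ) (hC : Integrable C μ) (hD : Integrable D μ)
    (c : ℝ) : Integrable (fun a => c * (A a - B a - C a + D a)) μ :=
  (integrable_combo hA hB hC hD).const_mul c

lemma integral_combo {α : Type*} [MeasurableSpace α] {μ : Measure α} {A B C D : α → ℝ}
    (hA : Integrable A μ) (hB : Integrable B μ) (hC : Integrable C μ) (hD : Integrable D μ) :
    ∫ a, (A a - B a - C a + D a) ∂μ
      = (∫ a, A a ∂μ) - (∫ a, B a ∂μ) - (∫ a, C a ∂μ) + ∫ a, D a ∂μ := by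
  have h1 := MeasureTheory.integral_add (μ := μ) ((hA.sub hB).sub hC) hD
  have h2 := MeasureTheory.integral_sub (μ := μ) (hA.sub hB) hC
  have h3 := MeasureTheory.integral_sub (μ := μ) hA hB
  simp only [Pi.add_apply, Pi.sub_apply] at h1 h2 h3
  rw [h1, h2, h3]

theorem stmt_13 (d : ℕ) (hd : 0 < d) (X : Finset (Fin d → ℝ))
    (hX : ∀ z ∈ X, ∀ k : Fin d, z k ∈ Set.Ico (0 : ℝ) 1) (w : (Fin d → ℝ) → ℝ) :
    (∫ x in Set.univ.pi fun _ : Fin d => Set.Ico (0 : ℝ) 1,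
        ∫ y in Set.univ.pi fun _ : Fin d => Set.Ico (0 : ℝ) 1,
          (perDisc X w x y) ^ 2) =
      -(∑ x ∈ X, w x) ^ 2 / 3 ^ d +
        ∑ x ∈ X, ∑ y ∈ X,
          w x * w y *
            ∏ k : Fin d,
              ((1 : ℝ) / 2 - |x k - y k| + |x k - y k| ^ 2) := by
  classical
  rw [setJoint]
  simp only [setJoint, ← MeasureTheory.integral_const_mul]
  have hD : ∀ x y : Fin d → ℝ, perDisc X w x y
      = ∑ z ∈ X, w z * ((∏ k, perInd (x k) (y k) (z k)) - ∏ k, perLen (x k) (y k)) := by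
    intro x y
    unfold perDisc
    rw [Finset.sum_mul, ← Finset.sum_sub_distrib]
    exact Finset.sum_congr rfl fun z _ => (mul_sub _ _ _).symm
  have hpt : ∀ x y : Fin d → ℝ,
      (∏ k, ico (x k)) * ((∏ k, ico (y k)) * perDisc X w x y ^ 2)
      = ∑ z ∈ X, ∑ z' ∈ X, w z * w z' *
        ((∏ k, ico (x k) * (ico (y k) * (perInd (x k) (y k) (z k) * perInd (x k) (y k) (z' k))))
        - (∏ k, ico (x k) * (ico (y k) * (perInd (x k) (y k) (z k) * perLen (x k) (y k))))
        - (∏ k, ico (x k) * (ico (y k) * (perInd (x k) (y k) (z' k) * perLen (x k) (y k))))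
        + ∏ k, ico (x k) * (ico (y k) * perLen (x k) (y k) ^ 2)) := by
    intro x y
    rw [hD, pow_two, Finset.sum_mul_sum]
    simp only [Finset.mul_sum]
    refine Finset.sum_congr rfl fun z _ => Finset.sum_congr rfl fun z' _ => ?_
    simp only [Finset.prod_mul_distrib, Finset.prod_pow]
    ring
  simp only [hpt]
  have hyx : ∀ x : Fin d → ℝ,
      (∫ y : Fin d → ℝ, ∑ z ∈ X, ∑ z' ∈ X, w z * w z' *
        ((∏ k, ico (x k) * (ico (y k) * (perInd (x k) (y k) (z k) * perInd (x k) (y k) (z' k))))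
        - (∏ k, ico (x k) * (ico (y k) * (perInd (x k) (y k) (z k) * perLen (x k) (y k))))
        - (∏ k, ico (x k) * (ico (y k) * (perInd (x k) (y k) (z' k) * perLen (x k) (y k))))
        + ∏ k, ico (x k) * (ico (y k) * perLen (x k) (y k) ^ 2)))
      = ∑ z ∈ X, ∑ z' ∈ X, w z * w z' *
        ((∏ k, ico (x k) * psi (z k) (z' k) (x k))
        - (∏ k, ico (x k) * phi (z k) (x k))
        - (∏ k, ico (x k) * phi (z' k) (x k))
        + ∏ k, ico (x k) * (1/3 : ℝ)) := by
    intro x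
    rw [MeasureTheory.integral_finset_sum X (fun z _ => integrable_finset_sum X (fun z' _ =>
      integrable_combo_mul (intT1 x z z') (intT2 x z) (intT2 x z') (intT4 x) (w z * w z')))]
    refine Finset.sum_congr rfl fun z hz => ?_
    rw [MeasureTheory.integral_finset_sum X (fun z' _ =>
      integrable_combo_mul (intT1 x z z') (intT2 x z) (intT2 x z') (intT4 x) (w z * w z'))]
    refine Finset.sum_congr rfl fun z' hz' => ?_
    rw [MeasureTheory.integral_const_mul]
    congr 1
    rw [integral_combo (intT1 x z z') (intT2 x z) (intT2 x z') (intT4 x),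
      evT1 x (fun k => hX z hz k) (fun k => hX z' hz' k),
      evT2 x (fun k => hX z hz k), evT2 x (fun k => hX z' hz' k), evT4 x]
  rw [MeasureTheory.integral_congr_ae (μ := (volume : Measure (Fin d → ℝ)))
    (Filter.Eventually.of_forall hyx)]
  rw [MeasureTheory.integral_finset_sum X (fun z hz => integrable_finset_sum X (fun z' hz' =>
    integrable_combo_mul (intP1 (fun k => hX z hz k) (fun k => hX z' hz' k))
      (intP2 (fun k => hX z hz k)) (intP2 (fun k => hX z' hz' k)) intP4 (w z * w z')))]
  calc
    ∑ z ∈ X, ∫ x : Fin d → ℝ, ∑ z' ∈ X, w z * w z' *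
        ((∏ k, ico (x k) * psi (z k) (z' k) (x k))
        - (∏ k, ico (x k) * phi (z k) (x k))
        - (∏ k, ico (x k) * phi (z' k) (x k))
        + ∏ k, ico (x k) * (1/3 : ℝ))
      = ∑ z ∈ X, ∑ z' ∈ X, w z * w z' *
          ((∏ k, ((1:ℝ)/2 - |z k - z' k| + |z k - z' k| ^ 2))
            - (1/3:ℝ)^d - (1/3:ℝ)^d + (1/3:ℝ)^d) := by
        refine Finset.sum_congr rfl fun z hz => ?_
        rw [MeasureTheory.integral_finset_sum X (fun z' hz' =>
          integrable_combo_mul (intP1 (fun k => hX z hz k) (fun k => hX z' hz' k))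
            (intP2 (fun k => hX z hz k)) (intP2 (fun k => hX z' hz' k)) intP4 (w z * w z'))]
        refine Finset.sum_congr rfl fun z' hz' => ?_
        rw [MeasureTheory.integral_const_mul]
        congr 1
        rw [integral_combo (intP1 (fun k => hX z hz k) (fun k => hX z' hz' k))
            (intP2 (fun k => hX z hz k)) (intP2 (fun k => hX z' hz' k)) intP4,
          evP1 (fun k => hX z hz k) (fun k => hX z' hz' k),
          evP2 (fun k => hX z hz k), evP2 (fun k => hX z' hz' k), evP4]
    _ = -(∑ x ∈ X, w x) ^ 2 / 3 ^ d +
        ∑ x ∈ X, ∑ y ∈ X, w x * w y *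
          ∏ k : Fin d, ((1 : ℝ) / 2 - |x k - y k| + |x k - y k| ^ 2) := by
        have hterm : ∀ z z' : Fin d → ℝ,
            w z * w z' * ((∏ k, ((1:ℝ)/2 - |z k - z' k| + |z k - z' k| ^ 2))
              - (1/3:ℝ)^d - (1/3:ℝ)^d + (1/3:ℝ)^d)
            = w z * w z' * (∏ k, ((1:ℝ)/2 - |z k - z' k| + |z k - z' k| ^ 2))
              - w z * w z' * (1/3:ℝ)^d := fun z z' => by ring
        simp only [hterm, Finset.sum_sub_distrib]
        have hW : ∑ z ∈ X, ∑ z' ∈ X, w z * w z' * (1/3:ℝ)^d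
            = (∑ z ∈ X, w z)^2 * (1/3:ℝ)^d := by
          rw [pow_two, Finset.sum_mul_sum]
          simp only [Finset.sum_mul]
        rw [hW, div_pow, one_pow]
        ring
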